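/- Let f, g : (X,d) → (Y,ρ) be nonexpanding maps between ultrametric spaces. Then sup{ρ̂(J_ω(f)(μ), J_ω(g)(μ)) : μ ∈ J_ω(X)} ≤ sup{ρ(f(x), g(x)) : x ∈ X}, as elements of [0,∞] (i.e., the functor J_ω is locally non-expansive). -/

import Mathlib

open scoped ENNReal

noncomputable section

/-- A metric is an *ultrametric* if the strong triangle inequality holds. -/
def IsUltra (X : Type*) [MetricSpace X] : Prop :=
  ∀ x y z : X, dist x y ≤ max (dist x z) (dist z y)

/-- `mmOf x α` is the max-min functional `∨ᵢ αᵢ ∧ δ_{x i}`,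
`φ ↦ maxᵢ min (α i) (φ (x i))` (computed in the extended reals). -/
def mmOf {A : Type*} {n : ℕ} (x : Fin (n + 1) → A) (α : Fin (n + 1) → EReal) :
    (A → ℝ) → ℝ :=
  fun φ => (⨆ i, min (α i) ((φ (x i) : EReal))).toReal

/-- `μ` is a max-min measure of finite support, with support contained in `S`. -/
def IsMMOn {A : Type*} (S : Set A) (μ : (A → ℝ) → ℝ) : Prop :=
  ∃ (n : ℕ) (x : Fin (n + 1) → A) (α : Fin (n + 1) → EReal),
    (∀ i, x i ∈ S) ∧ (∃ i, α i = ⊤) ∧ μ = mmOf x α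

/-- `μ` is a max-min measure of finite support. -/
def IsMM {A : Type*} (μ : (A → ℝ) → ℝ) : Prop :=
  IsMMOn Set.univ μ

/-- `idemOf x α` is the idempotent measure `∨ᵢ αᵢ ⊙ δ_{x i}`,
`φ ↦ maxᵢ (α i + φ (x i))` (computed in the extended reals). -/
def idemOf {A : Type*} {n : ℕ} (x : Fin (n + 1) → A) (α : Fin (n + 1) → EReal) :
    (A → ℝ) → ℝ :=
  fun φ => (⨆ i, (α i + (φ (x i) : EReal))).toReal

/-- `μ` is an idempotent measure of finite support, with support contained in `S`. -/
def IsIdemOn {A : Type*} (S : Set A) (μ : (A → ℝ) → ℝ) : Prop :=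
  ∃ (n : ℕ) (x : Fin (n + 1) → A) (α : Fin (n + 1) → EReal),
    (∀ i, x i ∈ S) ∧ (∀ i, α i ≤ 0) ∧ (∃ i, α i = 0) ∧ μ = idemOf x α

/-- `μ` is an idempotent measure of finite support. -/
def IsIdem {A : Type*} (μ : (A → ℝ) → ℝ) : Prop :=
  IsIdemOn Set.univ μ

/-- The Dirac measure `δ_a`. -/
def dirac {A : Type*} (a : A) : (A → ℝ) → ℝ := fun φ => φ a

/-- `FrE e r φ`: the function `φ` is constant on every open `r`-ball of the
(extended-valued) distance `e`; this is the family `𝓕_r`. -/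
def FrE {A : Type*} (e : A → A → ℝ≥0∞) (r : ℝ≥0∞) (φ : A → ℝ) : Prop :=
  ∀ x y : A, e x y < r → φ x = φ y

/-- The ultrametric `d̂` on functionals:
`d̂(μ,ν) = inf {r > 0 ∣ μ φ = ν φ for every φ ∈ 𝓕_r}`. -/
def dHatE {A : Type*} (e : A → A → ℝ≥0∞) (μ ν : (A → ℝ) → ℝ) : ℝ≥0∞ :=
  sInf {r : ℝ≥0∞ | 0 < r ∧ ∀ φ : A → ℝ, FrE e r φ → μ φ = ν φ}

/-- The pushforward `J_ω(f)` of functionals along `f`. -/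
def Jmap {A B : Type*} (f : A → B) (μ : (A → ℝ) → ℝ) : (B → ℝ) → ℝ :=
  fun φ => μ (φ ∘ f)

/-- The extended distance of a metric space, as a two-variable function. -/
def eD (X : Type*) [PseudoEMetricSpace X] : X → X → ℝ≥0∞ :=
  fun x y => edist x y

/-- The monad multiplication (`ξ` for max-min measures, `ζ` for idempotent
measures): `mult M φ = M (μ ↦ μ φ)`. -/
def mult {A : Type*} (M : (((A → ℝ) → ℝ) → ℝ) → ℝ) : (A → ℝ) → ℝ :=
  fun φ => M fun μ => μ φ


/-- The functor `J_ω` is locally non-expansive: for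
nonexpanding maps `f, g : (X,d) → (Y,ρ)` between ultrametric spaces,
`sup_{μ ∈ J_ω(X)} ρ̂(J_ω(f)(μ), J_ω(g)(μ)) ≤ sup_{x ∈ X} ρ(f x, g x)`
in `[0,∞]`. -/
theorem Jomega_locally_nonexpansive {X Y : Type*} [MetricSpace X] [MetricSpace Y]
    (hX : IsUltra X) (hY : IsUltra Y) (f g : X → Y)
    (hf : ∀ a b : X, dist (f a) (f b) ≤ dist a b)
    (hg : ∀ a b : X, dist (g a) (g b) ≤ dist a b) :
    (⨆ μ : {μ : (X → ℝ) → ℝ // IsMM μ},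
        dHatE (eD Y) (Jmap f μ.1) (Jmap g μ.1)) ≤
      ⨆ x : X, edist (f x) (g x) := by
  apply iSup_le
  rintro ⟨μ, -⟩
  set R := ⨆ x : X, edist (f x) (g x) with hR
  by_contra h
  push_neg at h
  obtain ⟨r, hRr, hrS⟩ := exists_between h
  have hmem : r ∈ {r : ℝ≥0∞ | 0 < r ∧ ∀ φ : Y → ℝ, FrE (eD Y) r φ →
      Jmap f μ φ = Jmap g μ φ} := by
    refine ⟨lt_of_le_of_lt (zero_le : (0 : ℝ≥0∞) ≤ R) hRr, fun φ hφ => ?_⟩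
    have hfg : φ ∘ f = φ ∘ g := by
      funext x
      exact hφ (f x) (g x) (lt_of_le_of_lt (le_iSup (fun x => edist (f x) (g x)) x) hRr)
    simp only [Jmap, hfg]
  exact absurd (sInf_le hmem) (not_le.mpr hrS)

end
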